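/- arXiv:2110.03045 — 2 statements merged into one kernel-verified Lean document; each statement's English description precedes it below -/
import Mathlib

section
/- Scalar variance bound for iterate-averaged 3DVAR: let A ≠ 0, Σ > 0, α > 0, γ > 0 be real, and on a probability space let (η_j)_{j≥1} be independent real random variables, each Gaussian with mean 0 and variance γ². Then for every τ_v ∈ [0,1] and every n ≥ 1, the averaged variance term Ī_n^{var} = (1/n) Σ_{j=1}^{n} Σ A q_{n−j+1,α}(A²Σ) η_j satisfies E[|Ī_n^{var}|²] ≤ (Σγ²/α)(A²Σ)^{−τ_v} (n/α)^{−τ_v}. -/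
open MeasureTheory ProbabilityTheory Finset Real
open scoped NNReal ENNReal

/-- `q_{n,α}(λ) = λ⁻¹ (1 − (α/(α+λ))^n)`. -/
noncomputable def qFun (n : ℕ) (α l : ℝ) : ℝ := l⁻¹ * (1 - (α / (α + l)) ^ n)

lemma integral_mul_exp_neg_mul_sq_eq_zero {b : ℝ} (hb : 0 < b) :
    ∫ x : ℝ, x * Real.exp (-b * x ^ 2) = 0 := by
  have hderiv : ∀ x : ℝ, HasDerivAt (fun x : ℝ => -(2*b)⁻¹ * Real.exp (-b * x ^ 2))
      (x * Real.exp (-b * x ^ 2)) x := by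
    intro x
    have h1 : HasDerivAt (fun x : ℝ => -b * x ^ 2) (-b * (2 * x)) x := by
      simpa using ((hasDerivAt_pow 2 x).const_mul (-b))
    have := (h1.exp).const_mul (-(2*b)⁻¹)
    refine this.congr_deriv ?_
    field_simp
  have hf : Integrable (fun x : ℝ => -(2*b)⁻¹ * Real.exp (-b * x ^ 2)) :=
    (integrable_exp_neg_mul_sq hb).const_mul _
  have hf' : Integrable (fun x : ℝ => x * Real.exp (-b * x ^ 2)) :=
    integrable_mul_exp_neg_mul_sq hb
  exact integral_eq_zero_of_hasDerivAt_of_integrable hderiv hf' hf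

lemma integrable_sq_mul_exp_neg_mul_sq {b : ℝ} (hb : 0 < b) :
    Integrable (fun x : ℝ => x ^ 2 * Real.exp (-b * x ^ 2)) := by
  have := integrable_rpow_mul_exp_neg_mul_sq hb (s := 2) (by norm_num)
  simpa [Real.rpow_natCast] using this

lemma integral_sq_mul_exp_neg_mul_sq {b : ℝ} (hb : 0 < b) :
    ∫ x : ℝ, x ^ 2 * Real.exp (-b * x ^ 2) = (2*b)⁻¹ * Real.sqrt (π / b) := by
  have hderiv : ∀ x : ℝ, HasDerivAt (fun x : ℝ => x * Real.exp (-b * x ^ 2))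
      (Real.exp (-b * x ^ 2) - 2 * b * (x ^ 2 * Real.exp (-b * x ^ 2))) x := by
    intro x
    have h1 : HasDerivAt (fun x : ℝ => -b * x ^ 2) (-b * (2 * x)) x := by
      simpa using ((hasDerivAt_pow 2 x).const_mul (-b))
    have := (hasDerivAt_id x).mul h1.exp
    refine this.congr_deriv ?_
    simp only [id]
    ring
  have hint : Integrable (fun x : ℝ =>
      Real.exp (-b * x ^ 2) - 2 * b * (x ^ 2 * Real.exp (-b * x ^ 2))) :=
    (integrable_exp_neg_mul_sq hb).sub ((integrable_sq_mul_exp_neg_mul_sq hb).const_mul _)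
  have hz := integral_eq_zero_of_hasDerivAt_of_integrable hderiv hint
    (integrable_mul_exp_neg_mul_sq hb)
  rw [integral_sub (integrable_exp_neg_mul_sq hb)
    ((integrable_sq_mul_exp_neg_mul_sq hb).const_mul _), integral_const_mul,
    integral_gaussian, sub_eq_zero] at hz
  have h2b : (2*b) ≠ 0 := by positivity
  rw [hz, inv_mul_cancel_left₀ h2b]



lemma gauss_withDensity {v : ℝ≥0} (hv : v ≠ 0) :
    gaussianReal 0 v =
      (volume : Measure ℝ).withDensity
        (fun x => ((Real.toNNReal (gaussianPDFReal 0 v x) : ℝ≥0) : ℝ≥0∞)) := by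
  rw [gaussianReal_of_var_ne_zero 0 hv]
  rfl

lemma pdf_eq {v : ℝ≥0} (x : ℝ) :
    gaussianPDFReal 0 v x = (Real.sqrt (2 * π * v))⁻¹ * Real.exp (-(2*(v:ℝ))⁻¹ * x ^ 2) := by
  unfold gaussianPDFReal
  rw [sub_zero, neg_div, div_eq_inv_mul, ← neg_mul]

lemma pdf_smul {v : ℝ≥0} (g : ℝ → ℝ) (x : ℝ) :
    (Real.toNNReal (gaussianPDFReal 0 v x) : ℝ≥0) • g x
      = (Real.sqrt (2 * π * v))⁻¹ * (g x * Real.exp (-(2*(v:ℝ))⁻¹ * x ^ 2)) := by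
  rw [NNReal.smul_def, Real.coe_toNNReal _ (gaussianPDFReal_nonneg 0 v x), smul_eq_mul, pdf_eq]
  ring

lemma hb_pos {v : ℝ≥0} (hv : v ≠ 0) : (0:ℝ) < (2*(v:ℝ))⁻¹ := by
  have : (0:ℝ) < v := lt_of_le_of_ne v.coe_nonneg (by exact_mod_cast (Ne.symm hv))
  positivity

lemma gauss_integral_id {v : ℝ≥0} (hv : v ≠ 0) : ∫ x, x ∂(gaussianReal 0 v) = 0 := by
  rw [gauss_withDensity hv,
    integral_withDensity_eq_integral_smul ((measurable_gaussianPDFReal 0 _).real_toNNReal) (fun x : ℝ => x)]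
  simp_rw [pdf_smul (fun x : ℝ => x)]
  rw [integral_const_mul, integral_mul_exp_neg_mul_sq_eq_zero (hb_pos hv), mul_zero]

lemma gauss_integral_sq {v : ℝ≥0} (hv : v ≠ 0) :
    ∫ x, x ^ 2 ∂(gaussianReal 0 v) = (v : ℝ) := by
  rw [gauss_withDensity hv,
    integral_withDensity_eq_integral_smul ((measurable_gaussianPDFReal 0 _).real_toNNReal) (fun x : ℝ => x ^ 2)]
  simp_rw [pdf_smul (fun x : ℝ => x ^ 2)]
  rw [integral_const_mul, integral_sq_mul_exp_neg_mul_sq (hb_pos hv)]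
  have hv' : (0:ℝ) < v := lt_of_le_of_ne v.coe_nonneg (by exact_mod_cast (Ne.symm hv))
  have h1 : (2 * ((2*(v:ℝ))⁻¹))⁻¹ = (v:ℝ) := by field_simp
  have h2 : Real.sqrt (π / (2*(v:ℝ))⁻¹) = Real.sqrt (2 * π * v) := by
    congr 1
    field_simp
  rw [h1, h2]
  have h3 : Real.sqrt (2 * π * (v:ℝ)) ≠ 0 := Real.sqrt_ne_zero'.mpr (by positivity)
  field_simp

lemma gauss_integrable_sq {v : ℝ≥0} (hv : v ≠ 0) :
    Integrable (fun x : ℝ => x ^ 2) (gaussianReal 0 v) := by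
  rw [gauss_withDensity hv, integrable_withDensity_iff_integrable_smul ((measurable_gaussianPDFReal 0 _).real_toNNReal)]
  simp_rw [pdf_smul (fun x : ℝ => x ^ 2)]
  exact (integrable_sq_mul_exp_neg_mul_sq (hb_pos hv)).const_mul _

lemma gauss_memℒp {v : ℝ≥0} (hv : v ≠ 0) :
    MemLp (fun x : ℝ => x) 2 (gaussianReal 0 v) := by
  rw [memLp_two_iff_integrable_sq (f := fun x : ℝ => x) measurable_id.aestronglyMeasurable]
  exact gauss_integrable_sq hv


lemma key_sum {Ω : Type*} [MeasurableSpace Ω] (μ : Measure Ω) [IsProbabilityMeasure μ]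
    (η : ℕ → Ω → ℝ) (hmeas : ∀ j, Measurable (η j))
    (hindep : iIndepFun η μ)
    (n : ℕ) (c : ℕ → ℝ) (γ2 : ℝ)
    (hL2 : ∀ j ∈ Icc 1 n, MemLp (η j) 2 μ)
    (hmean : ∀ j ∈ Icc 1 n, ∫ ω, η j ω ∂μ = 0)
    (hsq : ∀ j ∈ Icc 1 n, ∫ ω, (η j ω) ^ 2 ∂μ = γ2) :
    ∫ ω, (∑ j ∈ Icc 1 n, c j * η j ω) ^ 2 ∂μ = ∑ j ∈ Icc 1 n, (c j) ^ 2 * γ2 := by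
  have hindpair : ∀ j k : ℕ, j ≠ k →
      IndepFun (fun ω => c j * η j ω) (fun ω => c k * η k ω) μ := by
    intro j k hjk
    exact (hindep.indepFun hjk).comp (measurable_const_mul (c j)) (measurable_const_mul (c k))
  have hint : ∀ j ∈ Icc 1 n, ∀ k ∈ Icc 1 n,
      Integrable (fun ω => (c j * η j ω) * (c k * η k ω)) μ := by
    intro j hj k hk
    rcases eq_or_ne j k with rfl | hjk
    · have := ((hL2 j hj).const_mul (c j)).integrable_sq
      simpa [pow_two] using this
    · exact (hindpair j k hjk).integrable_mul
        (((hL2 j hj).const_mul (c j)).integrable one_le_two)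
        (((hL2 k hk).const_mul (c k)).integrable one_le_two)
  calc ∫ ω, (∑ j ∈ Icc 1 n, c j * η j ω) ^ 2 ∂μ
      = ∫ ω, ∑ j ∈ Icc 1 n, ∑ k ∈ Icc 1 n, (c j * η j ω) * (c k * η k ω) ∂μ := by
        congr 1
        funext ω
        rw [sq, Finset.sum_mul_sum]
    _ = ∑ j ∈ Icc 1 n, ∑ k ∈ Icc 1 n, ∫ ω, (c j * η j ω) * (c k * η k ω) ∂μ := by
        rw [integral_finset_sum _ (fun j hj =>
          integrable_finset_sum _ (fun k hk => hint j hj k hk))]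
        exact Finset.sum_congr rfl fun j hj =>
          integral_finset_sum _ (fun k hk => hint j hj k hk)
    _ = ∑ j ∈ Icc 1 n, (c j) ^ 2 * γ2 := by
        refine Finset.sum_congr rfl fun j hj => ?_
        rw [Finset.sum_eq_single j]
        · have h1 : (fun ω => (c j * η j ω) * (c j * η j ω))
              = fun ω => (c j) ^ 2 * (η j ω) ^ 2 := by funext ω; ring
          rw [h1, integral_const_mul, hsq j hj]
        · intro k hk hkj
          rw [(hindpair j k (Ne.symm hkj)).integral_fun_mul_eq_mul_integral
            ((hmeas j).const_mul _).aestronglyMeasurable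
            ((hmeas k).const_mul _).aestronglyMeasurable,
            integral_const_mul, integral_const_mul, hmean j hj, hmean k hk]
          ring
        · intro h; exact absurd hj h

/-- Scalar variance bound for iterate-averaged 3DVAR:
`E[|Ī_n^{var}|²] ≤ (Σγ²/α)(A²Σ)^{−τ_v}(n/α)^{−τ_v}` for all `τ_v ∈ [0,1]`, `n ≥ 1`. -/
theorem scalar_3dvar_averaged_variance_bound
    {Ω : Type*} [MeasurableSpace Ω] (μ : Measure Ω) [IsProbabilityMeasure μ]
    (A Sg α γ : ℝ) (hA : A ≠ 0) (hSg : 0 < Sg) (hα : 0 < α) (hγ : 0 < γ)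
    (η : ℕ → Ω → ℝ) (hmeas : ∀ j, Measurable (η j))
    (hindep : iIndepFun η μ)
    (hgauss : ∀ j, 1 ≤ j → Measure.map (η j) μ = gaussianReal 0 (Real.toNNReal (γ ^ 2))) :
    ∀ τv : ℝ, τv ∈ Set.Icc (0:ℝ) 1 → ∀ n : ℕ, 1 ≤ n →
      ∫ ω, ((1 / (n : ℝ)) *
          ∑ j ∈ Icc 1 n, Sg * A * qFun (n - j + 1) α (A ^ 2 * Sg) * η j ω) ^ 2 ∂μ ≤
        (Sg * γ ^ 2 / α) * (A ^ 2 * Sg) ^ (-τv) * ((n : ℝ) / α) ^ (-τv) := by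
  intro τv hτ n hn
  obtain ⟨hτ0, hτ1⟩ := hτ
  have hγ2 : (0:ℝ) < γ ^ 2 := by positivity
  set v : ℝ≥0 := Real.toNNReal (γ ^ 2) with hvdef
  have hv : v ≠ 0 := by
    simp only [hvdef, ne_eq, Real.toNNReal_eq_zero, not_le]
    exact hγ2
  have hvr : (v : ℝ) = γ ^ 2 := Real.coe_toNNReal _ hγ2.le
  -- facts about each η j
  have hL2 : ∀ j ∈ Icc 1 n, MemLp (η j) 2 μ := by
    intro j hj
    have hj1 : 1 ≤ j := (Finset.mem_Icc.mp hj).1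
    have h := (memLp_map_measure_iff (μ := μ) (f := η j) (g := fun x : ℝ => x)
      measurable_id.aestronglyMeasurable ((hmeas j).aemeasurable) (p := 2))
    rw [hgauss j hj1] at h
    exact h.mp (gauss_memℒp hv)
  have hmean : ∀ j ∈ Icc 1 n, ∫ ω, η j ω ∂μ = 0 := by
    intro j hj
    have hj1 : 1 ≤ j := (Finset.mem_Icc.mp hj).1
    have h := integral_map (μ := μ) (φ := η j) (f := fun x : ℝ => x)
      (hmeas j).aemeasurable measurable_id.aestronglyMeasurable
    rw [hgauss j hj1, gauss_integral_id hv] at h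
    exact h.symm
  have hsq : ∀ j ∈ Icc 1 n, ∫ ω, (η j ω) ^ 2 ∂μ = γ ^ 2 := by
    intro j hj
    have hj1 : 1 ≤ j := (Finset.mem_Icc.mp hj).1
    have h := integral_map (μ := μ) (φ := η j) (f := fun x : ℝ => x ^ 2)
      (hmeas j).aemeasurable (measurable_id.pow_const 2).aestronglyMeasurable
    rw [hgauss j hj1, gauss_integral_sq hv, hvr] at h
    exact h.symm
  -- abbreviations
  set l : ℝ := A ^ 2 * Sg with hl
  have hA2 : (0:ℝ) < A ^ 2 := pow_two_pos_of_ne_zero hA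
  have hlpos : 0 < l := mul_pos hA2 hSg
  have hn0 : (0:ℝ) < (n:ℝ) := by exact_mod_cast hn
  set r : ℝ := α / (α + l) with hr
  have hαl : 0 < α + l := by linarith
  have hr0 : 0 ≤ r := by positivity
  have hr1 : r ≤ 1 := by
    rw [hr, div_le_one hαl]; linarith
  set c : ℕ → ℝ := fun j => (1 / (n:ℝ)) * (Sg * A * qFun (n - j + 1) α l) with hc
  -- rewrite the integrand
  have hstep1 : ∫ ω, ((1 / (n : ℝ)) *
        ∑ j ∈ Icc 1 n, Sg * A * qFun (n - j + 1) α l * η j ω) ^ 2 ∂μ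
      = ∫ ω, (∑ j ∈ Icc 1 n, c j * η j ω) ^ 2 ∂μ := by
    congr 1
    funext ω
    congr 1
    rw [Finset.mul_sum]
    exact Finset.sum_congr rfl fun j _ => by rw [hc]; ring
  rw [hstep1, key_sum μ η hmeas hindep n c (γ ^ 2) hL2 hmean hsq]
  -- now the purely analytic bound
  set t : ℝ := (n:ℝ) * l / α with ht
  have htpos : 0 < t := by positivity
  -- bound each coefficient
  have hcval : ∀ j, c j = (1 - r ^ (n - j + 1)) / ((n:ℝ) * A) := by
    intro j
    rw [hc]
    show (1 / (n:ℝ)) * (Sg * A * (l⁻¹ * (1 - r ^ (n - j + 1)))) = _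
    rw [hl]
    field_simp
  have hub : ∀ j ∈ Icc 1 n, 0 ≤ 1 - r ^ (n - j + 1) ∧ 1 - r ^ (n - j + 1) ≤ min 1 t := by
    intro j hj
    obtain ⟨hj1, hjn⟩ := Finset.mem_Icc.mp hj
    set m : ℕ := n - j + 1 with hm
    have hmn : m ≤ n := by omega
    constructor
    · have : r ^ m ≤ 1 := pow_le_one₀ hr0 hr1
      linarith
    · refine le_min ?_ ?_
      · have : 0 ≤ r ^ m := pow_nonneg hr0 m
        linarith
      · -- Bernoulli
        have hber := one_add_mul_le_pow (a := r - 1) (by linarith) m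
        have h1 : (1:ℝ) + (r - 1) = r := by ring
        rw [h1] at hber
        have h2 : 1 - r ^ m ≤ (m:ℝ) * (1 - r) := by linarith
        have h3 : (m:ℝ) ≤ (n:ℝ) := by exact_mod_cast hmn
        have h4 : 1 - r = l / (α + l) := by
          rw [hr]; field_simp; ring
        have h5 : l / (α + l) ≤ l / α := by
          rw [div_le_div_iff₀ hαl hα]; nlinarith
        have h6 : 0 ≤ 1 - r := by linarith
        calc 1 - r ^ m ≤ (m:ℝ) * (1 - r) := h2
          _ ≤ (n:ℝ) * (1 - r) := by nlinarith
          _ ≤ (n:ℝ) * (l / α) := by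
              rw [h4]; exact mul_le_mul_of_nonneg_left h5 hn0.le
          _ = t := by rw [ht]; ring
  have hterm : ∀ j ∈ Icc 1 n, (c j) ^ 2 * γ ^ 2
      ≤ (min 1 t) ^ 2 * γ ^ 2 / ((n:ℝ) ^ 2 * A ^ 2) := by
    intro j hj
    obtain ⟨hu0, hu⟩ := hub j hj
    have h1 : (c j) ^ 2 = (1 - r ^ (n - j + 1)) ^ 2 / ((n:ℝ) ^ 2 * A ^ 2) := by
      rw [hcval j, div_pow]; congr 1; ring
    have h2 : (1 - r ^ (n - j + 1)) ^ 2 ≤ (min 1 t) ^ 2 :=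
      pow_le_pow_left₀ hu0 hu 2
    rw [h1, div_mul_eq_mul_div]
    gcongr
  -- sum the bounds
  have hsum : ∑ j ∈ Icc 1 n, (c j) ^ 2 * γ ^ 2
      ≤ (n:ℝ) * ((min 1 t) ^ 2 * γ ^ 2 / ((n:ℝ) ^ 2 * A ^ 2)) := by
    have := Finset.sum_le_card_nsmul (Icc 1 n) (fun j => (c j) ^ 2 * γ ^ 2)
      ((min 1 t) ^ 2 * γ ^ 2 / ((n:ℝ) ^ 2 * A ^ 2)) hterm
    rwa [Nat.card_Icc, Nat.add_sub_cancel, nsmul_eq_mul] at this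
  refine hsum.trans ?_
  -- final inequality
  have hcore : (min 1 t) ^ 2 ≤ t ^ (1 - τv) := by
    rcases le_total 1 t with h | h
    · rw [min_eq_left h, one_pow]
      calc (1:ℝ) = t ^ (0:ℝ) := (Real.rpow_zero t).symm
        _ ≤ t ^ (1 - τv) := Real.rpow_le_rpow_of_exponent_le h (by linarith)
    · rw [min_eq_right h]
      calc t ^ 2 = t ^ ((2:ℕ):ℝ) := (Real.rpow_natCast t 2).symm
        _ ≤ t ^ (1 - τv) := Real.rpow_le_rpow_of_exponent_ge htpos h (by push_cast; linarith)
  have hdiv : (min 1 t) ^ 2 / t ≤ t ^ (-τv) := by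
    have hts : t ^ (-τv) = t ^ (1 - τv) * t⁻¹ := by
      rw [← Real.rpow_neg_one t, ← Real.rpow_add htpos]
      congr 1
      ring
    rw [hts, div_eq_mul_inv]
    exact mul_le_mul_of_nonneg_right hcore (inv_nonneg.2 htpos.le)
  have hrhs : (Sg * γ ^ 2 / α) * l ^ (-τv) * ((n : ℝ) / α) ^ (-τv)
      = (Sg * γ ^ 2 / α) * t ^ (-τv) := by
    rw [mul_assoc, ← Real.mul_rpow hlpos.le (by positivity)]
    congr 2
    rw [ht]; field_simp
  rw [hrhs]
  have hlhs : (n:ℝ) * ((min 1 t) ^ 2 * γ ^ 2 / ((n:ℝ) ^ 2 * A ^ 2))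
      = (Sg * γ ^ 2 / α) * ((min 1 t) ^ 2 / t) := by
    rw [ht, hl]
    field_simp
  rw [hlhs]
  exact mul_le_mul_of_nonneg_left hdiv (by positivity)
end

section
/- Mean-squared error bound for iterate-averaged 3DVAR in the simultaneously diagonalized case: under the diagonal setup, fix γ > 0, suppose Σ_{i=1}^∞ i^{2β} v_{0,i}² < ∞, and let τ_b, τ_v ∈ [0,1] satisfy τ_b ≤ (t(1+2ε) + 2β)/(2(1 + 2ε + 2p)) and τ_v < (t(1+2ε) + 2ε)/(1 + 2ε + 2p). Then there exists a constant C > 0 such that for every n ≥ 1 and the given α, the mean-squared error B_n(α) + V_n(α) ≤ C ( (n/α)^{−2τ_b} + (γ²/α)(n/α)^{−τ_v} ), where B_n(α) = (α/n)² Σ_{i=1}^∞ σ_i^t q_{n,α}(σ_i a_i²)² v_{0,i}² and V_n(α) = (γ²/n²) Σ_{j=1}^{n} Σ_{i=1}^∞ σ_i^{t+2} a_i² q_{j,α}(σ_i a_i²)². In particular the iterate-averaged 3DVAR converges in mean square in the ‖·‖_t norm for every fixed α > 0 whenever τ_b and τ_v can be chosen positive. -/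
open Finset

/-- Squared bias of iterate-averaged 3DVAR in the diagonal case (sequences are 1-based):
`B_n(α) = (α/n)² Σ_{i≥1} σ_i^t q_{n,α}(σ_i a_i²)² v_{0,i}²`. -/
noncomputable def Bterm (σ a v0 : ℕ → ℝ) (t : ℝ) (α : ℝ) (n : ℕ) : ℝ :=
  (α / (n : ℝ)) ^ 2 *
    ∑' i : ℕ, (σ (i + 1)) ^ t * (qFun n α (σ (i + 1) * (a (i + 1)) ^ 2)) ^ 2 * (v0 (i + 1)) ^ 2

/-- Variance term of iterate-averaged 3DVAR in the diagonal case (sequences are 1-based):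
`V_n(α) = (γ²/n²) Σ_{j=1}^n Σ_{i≥1} σ_i^{t+2} a_i² q_{j,α}(σ_i a_i²)²`. -/
noncomputable def Vterm (σ a : ℕ → ℝ) (t γ : ℝ) (α : ℝ) (n : ℕ) : ℝ :=
  (γ ^ 2 / (n : ℝ) ^ 2) *
    ∑ j ∈ Icc 1 n, ∑' i : ℕ,
      (σ (i + 1)) ^ (t + 2) * (a (i + 1)) ^ 2 * (qFun j α (σ (i + 1) * (a (i + 1)) ^ 2)) ^ 2

lemma qFun_nonneg (n : ℕ) {α l : ℝ} (hα : 0 < α) (hl : 0 < l) : 0 ≤ qFun n α l := by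
  have h1 : (α / (α + l)) ^ n ≤ 1 := by
    apply pow_le_one₀ (by positivity)
    rw [div_le_one (by linarith)]; linarith
  have h2 : 0 ≤ 1 - (α / (α + l)) ^ n := by linarith
  exact mul_nonneg (by positivity) h2

lemma qFun_le_inv (n : ℕ) {α l : ℝ} (hα : 0 < α) (hl : 0 < l) : qFun n α l ≤ l⁻¹ := by
  have h0 : (0:ℝ) ≤ (α / (α + l)) ^ n := by positivity
  have h2 : 1 - (α / (α + l)) ^ n ≤ 1 := by linarith
  calc qFun n α l ≤ l⁻¹ * 1 := mul_le_mul_of_nonneg_left h2 (by positivity)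
  _ = l⁻¹ := mul_one _

lemma qFun_le_div (n : ℕ) {α l : ℝ} (hα : 0 < α) (hl : 0 < l) : qFun n α l ≤ (n : ℝ) / α := by
  have hal : 0 < α + l := by linarith
  have hb := one_add_mul_le_pow (a := -(l / (α + l))) (by
    have : l / (α + l) ≤ 1 := by rw [div_le_one hal]; linarith
    linarith) n
  have he : 1 + -(l / (α + l)) = α / (α + l) := by field_simp; ring
  rw [he] at hb
  have key : 1 - (α / (α + l)) ^ n ≤ (n : ℝ) * (l / (α + l)) := by
    have : 1 + (n:ℝ) * -(l / (α + l)) = 1 - (n:ℝ) * (l / (α + l)) := by ring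
    linarith [hb, this]
  calc qFun n α l = l⁻¹ * (1 - (α / (α + l)) ^ n) := rfl
  _ ≤ l⁻¹ * ((n:ℝ) * (l / (α + l))) := mul_le_mul_of_nonneg_left key (by positivity)
  _ = (n:ℝ) / (α + l) := by field_simp
  _ ≤ (n:ℝ) / α := by
      have hal' : α ≤ α + l := by linarith
      gcongr

lemma min_le_rpow_mul {x y θ : ℝ} (hx : 0 < x) (hy : 0 < y) (hθ0 : 0 ≤ θ) (hθ1 : θ ≤ 1) :
    min x y ≤ x ^ (1 - θ) * y ^ θ := by
  have hm : 0 < min x y := lt_min hx hy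
  calc min x y = (min x y) ^ (1 - θ) * (min x y) ^ θ := by
        rw [← Real.rpow_add hm, sub_add_cancel, Real.rpow_one]
  _ ≤ x ^ (1 - θ) * y ^ θ :=
      mul_le_mul (Real.rpow_le_rpow hm.le (min_le_left _ _) (by linarith))
        (Real.rpow_le_rpow hm.le (min_le_right _ _) hθ0)
        (Real.rpow_nonneg hm.le _) (Real.rpow_nonneg hx.le _)

lemma qFun_interp {n : ℕ} {α l θ : ℝ} (hα : 0 < α) (hl : 0 < l) (hn : 1 ≤ n)
    (hθ0 : 0 ≤ θ) (hθ1 : θ ≤ 1) :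
    qFun n α l ≤ l ^ (θ - 1) * ((n : ℝ) / α) ^ θ := by
  have hn' : (0:ℝ) < (n:ℝ) := by exact_mod_cast hn
  have h1 : qFun n α l ≤ min l⁻¹ ((n:ℝ)/α) :=
    le_min (qFun_le_inv n hα hl) (qFun_le_div n hα hl)
  have h2 := min_le_rpow_mul (x := l⁻¹) (y := (n:ℝ)/α) (by positivity) (by positivity) hθ0 hθ1
  have h3 : (l⁻¹) ^ (1 - θ) = l ^ (θ - 1) := by
    rw [Real.inv_rpow hl.le, ← Real.rpow_neg hl.le]
    congr 1; ring
  rw [h3] at h2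
  exact h1.trans h2

lemma qFun_sq_le {n : ℕ} {α l θ : ℝ} (hα : 0 < α) (hl : 0 < l) (hn : 1 ≤ n)
    (hθ0 : 0 ≤ θ) (hθ1 : θ ≤ 1) :
    (qFun n α l) ^ 2 ≤ l ^ (2*θ - 2) * ((n : ℝ) / α) ^ (2*θ) := by
  have hn' : (0:ℝ) < (n:ℝ) := by exact_mod_cast hn
  have hna : (0:ℝ) < (n:ℝ)/α := by positivity
  have h := qFun_interp hα hl hn hθ0 hθ1
  have h0 := qFun_nonneg n hα hl
  calc (qFun n α l)^2 ≤ (l ^ (θ-1) * ((n:ℝ)/α) ^ θ)^2 := pow_le_pow_left₀ h0 h 2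
  _ = l ^ (2*θ-2) * ((n:ℝ)/α) ^ (2*θ) := by
      rw [mul_pow, ← Real.rpow_natCast (l ^ (θ-1)) 2, ← Real.rpow_natCast (((n:ℝ)/α) ^ θ) 2,
          ← Real.rpow_mul hl.le, ← Real.rpow_mul hna.le]
      rw [show (θ-1)*((2:ℕ):ℝ) = 2*θ-2 by push_cast; ring, show θ*((2:ℕ):ℝ) = 2*θ by push_cast; ring]

lemma upper_rpow {y c x e s : ℝ} (hc : 0 < c) (hx : 0 < x) (hy : 0 < y)
    (h : y ≤ c * x ^ e) (hs : 0 ≤ s) : y ^ s ≤ c ^ s * x ^ (e * s) := by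
  calc y ^ s ≤ (c * x ^ e) ^ s := Real.rpow_le_rpow hy.le h hs
  _ = c ^ s * x ^ (e * s) := by
      rw [Real.mul_rpow hc.le (Real.rpow_nonneg hx.le _), ← Real.rpow_mul hx.le]

lemma upper_rpow_neg {y c x e s : ℝ} (hc : 0 < c) (hx : 0 < x)
    (h : c * x ^ e ≤ y) (hs : s ≤ 0) : y ^ s ≤ c ^ s * x ^ (e * s) := by
  have h0 : 0 < c * x ^ e := mul_pos hc (Real.rpow_pos_of_pos hx e)
  calc y ^ s ≤ (c * x ^ e) ^ s := Real.rpow_le_rpow_of_nonpos h0 h hs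
  _ = c ^ s * x ^ (e * s) := by
      rw [Real.mul_rpow hc.le (Real.rpow_nonneg hx.le _), ← Real.rpow_mul hx.le]

lemma sq_rpow {x : ℝ} (e : ℝ) (hx : 0 ≤ x) : (x ^ e) ^ (2:ℕ) = x ^ (e * 2) := by
  rw [← Real.rpow_natCast (x ^ e) 2, ← Real.rpow_mul hx]
  norm_num

lemma summable_shift_rpow {e : ℝ} (he : e < -1) :
    Summable (fun i : ℕ => ((i:ℝ) + 1) ^ e) := by
  have h1 : Summable (fun i : ℕ => ((i:ℝ)) ^ e) := Real.summable_nat_rpow.mpr he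
  have h2 := (summable_nat_add_iff 1).mpr h1
  refine h2.congr fun i => ?_
  push_cast
  ring_nf

set_option maxHeartbeats 1000000 in
/-- Mean-squared error bound for iterate-averaged 3DVAR in the simultaneously
diagonalized case: if `Σ i^{2β} v_{0,i}² < ∞`, `τ_b, τ_v ∈ [0,1]`,
`τ_b ≤ (t(1+2ε)+2β)/(2(1+2ε+2p))` and `τ_v < (t(1+2ε)+2ε)/(1+2ε+2p)`, then
`B_n(α) + V_n(α) ≤ C ((n/α)^{−2τ_b} + (γ²/α)(n/α)^{−τ_v})`. -/
theorem diagonal_mse_bound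
    (ε p α t β γ : ℝ) (hε : 0 < ε) (hp : 0 < p) (hα : 0 < α) (ht : 0 ≤ t) (hβ : 0 ≤ β)
    (hγ : 0 < γ)
    (σ a v0 : ℕ → ℝ) (c₁ c₂ : ℝ) (hc₁ : 0 < c₁) (hc₁₂ : c₁ ≤ c₂)
    (hσ : ∀ i : ℕ, 1 ≤ i → c₁ * (i : ℝ) ^ (-1 - 2 * ε) ≤ σ i ∧ σ i ≤ c₂ * (i : ℝ) ^ (-1 - 2 * ε))
    (ha : ∀ i : ℕ, 1 ≤ i → c₁ * (i : ℝ) ^ (-p) ≤ a i ∧ a i ≤ c₂ * (i : ℝ) ^ (-p))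
    (hv : Summable (fun i : ℕ => ((i : ℝ) + 1) ^ (2 * β) * (v0 (i + 1)) ^ 2))
    (τb τv : ℝ) (hτb0 : 0 ≤ τb) (hτb1 : τb ≤ 1) (hτv0 : 0 ≤ τv) (hτv1 : τv ≤ 1)
    (hτb : τb ≤ (t * (1 + 2 * ε) + 2 * β) / (2 * (1 + 2 * ε + 2 * p)))
    (hτv : τv < (t * (1 + 2 * ε) + 2 * ε) / (1 + 2 * ε + 2 * p)) :
    ∃ C : ℝ, 0 < C ∧ ∀ n : ℕ, 1 ≤ n →
      Bterm σ a v0 t α n + Vterm σ a t γ α n ≤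
        C * (((n : ℝ) / α) ^ (-(2 * τb)) + (γ ^ 2 / α) * ((n : ℝ) / α) ^ (-τv)) := by
  have hc₂ : 0 < c₂ := hc₁.trans_le hc₁₂
  have hM : (0:ℝ) < 1 + 2*ε + 2*p := by linarith
  have hxpos : ∀ i : ℕ, (0:ℝ) < (i:ℝ) + 1 := fun i => by positivity
  have hx1 : ∀ i : ℕ, (1:ℝ) ≤ (i:ℝ) + 1 := fun i => by
    have : (0:ℝ) ≤ (i:ℝ) := Nat.cast_nonneg i
    linarith
  have hσb : ∀ i : ℕ, c₁ * ((i:ℝ)+1) ^ (-1 - 2*ε) ≤ σ (i+1) ∧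
      σ (i+1) ≤ c₂ * ((i:ℝ)+1) ^ (-1 - 2*ε) := by
    intro i
    have h := hσ (i+1) (by omega)
    push_cast at h
    exact h
  have hab : ∀ i : ℕ, c₁ * ((i:ℝ)+1) ^ (-p) ≤ a (i+1) ∧ a (i+1) ≤ c₂ * ((i:ℝ)+1) ^ (-p) := by
    intro i
    have h := ha (i+1) (by omega)
    push_cast at h
    exact h
  have hσpos : ∀ i : ℕ, 0 < σ (i+1) := fun i =>
    lt_of_lt_of_le (by positivity) (hσb i).1
  have hapos : ∀ i : ℕ, 0 < a (i+1) := fun i =>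
    lt_of_lt_of_le (by positivity) (hab i).1
  have hlpos : ∀ i : ℕ, 0 < σ (i+1) * a (i+1)^2 := fun i =>
    mul_pos (hσpos i) (pow_pos (hapos i) 2)
  have hllb : ∀ i : ℕ, c₁^3 * ((i:ℝ)+1) ^ ((-1 - 2*ε) + (-p)*2) ≤ σ (i+1) * a (i+1)^2 := by
    intro i
    have h1 : c₁^2 * (((i:ℝ)+1) ^ (-p))^2 ≤ a (i+1)^2 := by
      calc c₁^2 * (((i:ℝ)+1)^(-p))^2 = (c₁ * ((i:ℝ)+1)^(-p))^2 := by ring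
      _ ≤ a (i+1)^2 := pow_le_pow_left₀ (by positivity) (hab i).1 2
    calc c₁^3 * ((i:ℝ)+1) ^ ((-1 - 2*ε) + (-p)*2)
        = (c₁ * ((i:ℝ)+1)^(-1 - 2*ε)) * (c₁^2 * (((i:ℝ)+1)^(-p))^2) := by
          rw [Real.rpow_add (hxpos i), sq_rpow (-p) (hxpos i).le]; ring
    _ ≤ σ (i+1) * a (i+1)^2 :=
        mul_le_mul (hσb i).1 h1 (by positivity) (hσpos i).le
  -- bias exponent fact
  have hτb' : τb * (2*(1 + 2*ε + 2*p)) ≤ t*(1 + 2*ε) + 2*β := by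
    have h2M : (0:ℝ) < 2*(1 + 2*ε + 2*p) := by linarith
    exact (le_div_iff₀ h2M).mp hτb
  -- variance exponent parameters
  set κ := (t*(1 + 2*ε) + 2*ε)/(1 + 2*ε + 2*p) with hκdef
  set τ' := min 1 ((τv + κ)/2) with hτ'def
  have hκτ : τv < κ := hτv
  have hτ'v : τv ≤ τ' := le_min hτv1 (by rw [hκdef] at hκτ ⊢; linarith)
  have hτ'1 : τ' ≤ 1 := min_le_left _ _
  have hτ'0 : 0 ≤ τ' := le_trans hτv0 hτ'v
  have hτ'κ : τ' < κ := lt_of_le_of_lt (min_le_right _ _) (by linarith)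
  have hτ'M : τ' * (1 + 2*ε + 2*p) < t*(1 + 2*ε) + 2*ε := by
    have h2 : κ * (1 + 2*ε + 2*p) = t*(1 + 2*ε) + 2*ε :=
      div_mul_cancel₀ _ (ne_of_gt hM)
    calc τ' * (1 + 2*ε + 2*p) < κ * (1 + 2*ε + 2*p) :=
          mul_lt_mul_of_pos_right hτ'κ hM
    _ = t*(1 + 2*ε) + 2*ε := h2
  have hEv : (-1 - 2*ε)*(t+2) + (-p)*2 + ((-1 - 2*ε) + (-p)*2)*(-(1+τ')) < -1 := by
    nlinarith [hτ'M]
  have hSEs : Summable (fun i : ℕ =>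
      ((i:ℝ)+1) ^ ((-1 - 2*ε)*(t+2) + (-p)*2 + ((-1 - 2*ε) + (-p)*2)*(-(1+τ')))) :=
    summable_shift_rpow hEv
  -- constants
  set Kb := c₂ ^ t * (c₁^3) ^ (-(2*τb)) with hKbdef
  have hKb : 0 < Kb := mul_pos (Real.rpow_pos_of_pos hc₂ t)
    (Real.rpow_pos_of_pos (by positivity) _)
  set Kv := c₂ ^ (t+2) * c₂^2 * (c₁^3) ^ (-(1+τ')) with hKvdef
  have hKv : 0 < Kv := by
    apply mul_pos (mul_pos (Real.rpow_pos_of_pos hc₂ _) (by positivity))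
      (Real.rpow_pos_of_pos (by positivity) _)
  set T0 := ∑' i : ℕ, ((i:ℝ)+1)^(2*β) * v0 (i+1)^2 with hT0def
  have hT0 : 0 ≤ T0 := tsum_nonneg fun i =>
    mul_nonneg (Real.rpow_nonneg (hxpos i).le _) (sq_nonneg _)
  set SE := ∑' i : ℕ,
      ((i:ℝ)+1) ^ ((-1 - 2*ε)*(t+2) + (-p)*2 + ((-1 - 2*ε) + (-p)*2)*(-(1+τ'))) with hSEdef
  have hSE : 0 ≤ SE := tsum_nonneg fun i => Real.rpow_nonneg (hxpos i).le _
  set CB := Kb * T0 with hCBdef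
  have hCB : 0 ≤ CB := mul_nonneg hKb.le hT0
  set CV := Kv * SE * max 1 α with hCVdef
  have hCV : 0 ≤ CV := mul_nonneg (mul_nonneg hKv.le hSE) (le_trans zero_le_one (le_max_left _ _))
  refine ⟨CB + CV + 1, by linarith, ?_⟩
  intro n hn
  have hn' : (0:ℝ) < (n:ℝ) := by exact_mod_cast hn
  have hN : (0:ℝ) < (n:ℝ)/α := by positivity
  -- ============ bias bound ============
  have hNN : (α/(n:ℝ))^2 * ((n:ℝ)/α)^(2 - 2*τb) = ((n:ℝ)/α)^(-(2*τb)) := by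
    have h2 : (α/(n:ℝ))^2 = ((n:ℝ)/α) ^ ((-2):ℝ) := by
      have h3 : ((n:ℝ)/α) ^ ((-2):ℝ) = (((n:ℝ)/α) ^ (2:ℕ))⁻¹ := by
        rw [← Real.rpow_natCast ((n:ℝ)/α) 2, ← Real.rpow_neg hN.le]
        norm_num
      rw [h3, ← inv_pow, inv_div]
    rw [h2, ← Real.rpow_add hN]
    congr 1; ring
  have claimB : ∀ i : ℕ, (α/(n:ℝ))^2 *
      (σ (i+1) ^ t * qFun n α (σ (i+1) * a (i+1)^2) ^ 2 * v0 (i+1)^2) ≤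
      (((n:ℝ)/α)^(-(2*τb)) * Kb) * (((i:ℝ)+1)^(2*β) * v0 (i+1)^2) := by
    intro i
    have hq : qFun n α (σ (i+1) * a (i+1)^2) ^ 2 ≤
        (σ (i+1) * a (i+1)^2) ^ (-(2*τb)) * ((n:ℝ)/α) ^ (2 - 2*τb) := by
      have h := qFun_sq_le (θ := 1 - τb) hα (hlpos i) hn (by linarith) (by linarith)
      rwa [show 2*(1-τb) - 2 = -(2*τb) by ring, show 2*(1-τb) = 2 - 2*τb by ring] at h
    have hl2 : (σ (i+1) * a (i+1)^2) ^ (-(2*τb)) ≤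
        (c₁^3) ^ (-(2*τb)) * ((i:ℝ)+1) ^ (((-1 - 2*ε) + (-p)*2) * (-(2*τb))) :=
      upper_rpow_neg (by positivity) (hxpos i) (hllb i) (by linarith)
    have hσt : σ (i+1) ^ t ≤ c₂ ^ t * ((i:ℝ)+1) ^ ((-1 - 2*ε) * t) :=
      upper_rpow hc₂ (hxpos i) (hσpos i) (hσb i).2 ht
    have hqx : qFun n α (σ (i+1) * a (i+1)^2) ^ 2 ≤
        ((c₁^3) ^ (-(2*τb)) * ((i:ℝ)+1) ^ (((-1 - 2*ε) + (-p)*2) * (-(2*τb)))) *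
          ((n:ℝ)/α) ^ (2 - 2*τb) :=
      hq.trans (mul_le_mul_of_nonneg_right hl2 (Real.rpow_nonneg hN.le _))
    have step : σ (i+1) ^ t * qFun n α (σ (i+1) * a (i+1)^2) ^ 2 * v0 (i+1)^2 ≤
        (c₂ ^ t * ((i:ℝ)+1) ^ ((-1 - 2*ε) * t)) *
          (((c₁^3) ^ (-(2*τb)) * ((i:ℝ)+1) ^ (((-1 - 2*ε) + (-p)*2) * (-(2*τb)))) *
            ((n:ℝ)/α) ^ (2 - 2*τb)) * v0 (i+1)^2 := by
      refine mul_le_mul (mul_le_mul hσt hqx (sq_nonneg _) ?_) le_rfl (sq_nonneg _) ?_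
      · exact mul_nonneg (Real.rpow_nonneg hc₂.le _) (Real.rpow_nonneg (hxpos i).le _)
      · exact mul_nonneg
          (mul_nonneg (Real.rpow_nonneg hc₂.le _) (Real.rpow_nonneg (hxpos i).le _))
          (mul_nonneg (mul_nonneg (Real.rpow_nonneg (pow_pos hc₁ 3).le _)
            (Real.rpow_nonneg (hxpos i).le _)) (Real.rpow_nonneg hN.le _))
    have hxx : ((i:ℝ)+1) ^ ((-1 - 2*ε) * t) *
        ((i:ℝ)+1) ^ (((-1 - 2*ε) + (-p)*2) * (-(2*τb))) =
        ((i:ℝ)+1) ^ ((-1 - 2*ε) * t + ((-1 - 2*ε) + (-p)*2) * (-(2*τb))) :=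
      (Real.rpow_add (hxpos i) _ _).symm
    have hEb : ((i:ℝ)+1) ^ ((-1 - 2*ε) * t + ((-1 - 2*ε) + (-p)*2) * (-(2*τb))) ≤
        ((i:ℝ)+1) ^ (2*β) :=
      Real.rpow_le_rpow_of_exponent_le (hx1 i) (by nlinarith [hτb'])
    calc (α/(n:ℝ))^2 * (σ (i+1) ^ t * qFun n α (σ (i+1) * a (i+1)^2) ^ 2 * v0 (i+1)^2)
        ≤ (α/(n:ℝ))^2 * ((c₂ ^ t * ((i:ℝ)+1) ^ ((-1 - 2*ε) * t)) *
            (((c₁^3) ^ (-(2*τb)) * ((i:ℝ)+1) ^ (((-1 - 2*ε) + (-p)*2) * (-(2*τb)))) *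
              ((n:ℝ)/α) ^ (2 - 2*τb)) * v0 (i+1)^2) :=
          mul_le_mul_of_nonneg_left step (sq_nonneg _)
    _ = (c₂ ^ t * (c₁^3) ^ (-(2*τb))) * ((α/(n:ℝ))^2 * ((n:ℝ)/α) ^ (2 - 2*τb)) *
          (((i:ℝ)+1) ^ ((-1 - 2*ε) * t) *
            ((i:ℝ)+1) ^ (((-1 - 2*ε) + (-p)*2) * (-(2*τb))) * v0 (i+1)^2) := by ring
    _ = (c₂ ^ t * (c₁^3) ^ (-(2*τb))) * ((n:ℝ)/α) ^ (-(2*τb)) *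
          (((i:ℝ)+1) ^ ((-1 - 2*ε) * t + ((-1 - 2*ε) + (-p)*2) * (-(2*τb))) * v0 (i+1)^2) := by
        rw [hNN, hxx]
    _ ≤ (c₂ ^ t * (c₁^3) ^ (-(2*τb))) * ((n:ℝ)/α) ^ (-(2*τb)) *
          (((i:ℝ)+1) ^ (2*β) * v0 (i+1)^2) := by
        refine mul_le_mul_of_nonneg_left (mul_le_mul_of_nonneg_right hEb (sq_nonneg _)) ?_
        refine mul_nonneg (mul_nonneg (Real.rpow_nonneg hc₂.le _)
          (Real.rpow_nonneg (by positivity) _)) (Real.rpow_nonneg hN.le _)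
    _ = (((n:ℝ)/α)^(-(2*τb)) * Kb) * (((i:ℝ)+1)^(2*β) * v0 (i+1)^2) := by
        rw [hKbdef]; ring
  have hgB : Summable (fun i : ℕ => (((n:ℝ)/α)^(-(2*τb)) * Kb) *
      (((i:ℝ)+1)^(2*β) * v0 (i+1)^2)) := hv.mul_left _
  have hfnn : ∀ i : ℕ, 0 ≤ (α/(n:ℝ))^2 *
      (σ (i+1) ^ t * qFun n α (σ (i+1) * a (i+1)^2) ^ 2 * v0 (i+1)^2) := fun i =>
    mul_nonneg (sq_nonneg _) (mul_nonneg (mul_nonneg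
      (Real.rpow_nonneg (hσpos i).le _) (sq_nonneg _)) (sq_nonneg _))
  have hfs : Summable (fun i : ℕ => (α/(n:ℝ))^2 *
      (σ (i+1) ^ t * qFun n α (σ (i+1) * a (i+1)^2) ^ 2 * v0 (i+1)^2)) :=
    Summable.of_nonneg_of_le hfnn claimB hgB
  have hBle : Bterm σ a v0 t α n ≤ CB * ((n:ℝ)/α)^(-(2*τb)) := by
    have h1 : Bterm σ a v0 t α n = ∑' i : ℕ, (α/(n:ℝ))^2 *
        (σ (i+1) ^ t * qFun n α (σ (i+1) * a (i+1)^2) ^ 2 * v0 (i+1)^2) := by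
      unfold Bterm
      exact tsum_mul_left.symm
    rw [h1]
    calc _ ≤ ∑' i : ℕ, (((n:ℝ)/α)^(-(2*τb)) * Kb) * (((i:ℝ)+1)^(2*β) * v0 (i+1)^2) :=
          Summable.tsum_le_tsum claimB hfs hgB
    _ = (((n:ℝ)/α)^(-(2*τb)) * Kb) * T0 := by rw [tsum_mul_left, hT0def]
    _ = CB * ((n:ℝ)/α)^(-(2*τb)) := by rw [hCBdef]; ring
  -- ============ variance bound ============
  have hinner : ∀ j ∈ Finset.Icc 1 n, (∑' i : ℕ,
      σ (i+1) ^ (t+2) * a (i+1)^2 * qFun j α (σ (i+1) * a (i+1)^2) ^ 2) ≤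
      (Kv * ((n:ℝ)/α)^(1-τ')) * SE := by
    intro j hj
    rw [Finset.mem_Icc] at hj
    have hj1 : 1 ≤ j := hj.1
    have hj' : (0:ℝ) < (j:ℝ) := by exact_mod_cast hj1
    have hJ : (0:ℝ) < (j:ℝ)/α := by positivity
    have claimV : ∀ i : ℕ,
        σ (i+1) ^ (t+2) * a (i+1)^2 * qFun j α (σ (i+1) * a (i+1)^2) ^ 2 ≤
        (Kv * ((j:ℝ)/α)^(1-τ')) *
          ((i:ℝ)+1) ^ ((-1 - 2*ε)*(t+2) + (-p)*2 + ((-1 - 2*ε) + (-p)*2)*(-(1+τ'))) := by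
      intro i
      have hq : qFun j α (σ (i+1) * a (i+1)^2) ^ 2 ≤
          (σ (i+1) * a (i+1)^2) ^ (-(1+τ')) * ((j:ℝ)/α) ^ (1-τ') := by
        have h := qFun_sq_le (θ := (1-τ')/2) hα (hlpos i) hj1 (by linarith) (by linarith)
        rwa [show 2*((1-τ')/2) - 2 = -(1+τ') by ring, show 2*((1-τ')/2) = 1-τ' by ring] at h
      have hl3 : (σ (i+1) * a (i+1)^2) ^ (-(1+τ')) ≤
          (c₁^3) ^ (-(1+τ')) * ((i:ℝ)+1) ^ (((-1 - 2*ε) + (-p)*2) * (-(1+τ'))) :=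
        upper_rpow_neg (by positivity) (hxpos i) (hllb i) (by linarith)
      have hσt2 : σ (i+1) ^ (t+2) ≤ c₂ ^ (t+2) * ((i:ℝ)+1) ^ ((-1 - 2*ε) * (t+2)) :=
        upper_rpow hc₂ (hxpos i) (hσpos i) (hσb i).2 (by linarith)
      have ha2 : a (i+1)^2 ≤ c₂^2 * ((i:ℝ)+1) ^ ((-p)*2) := by
        calc a (i+1)^2 ≤ (c₂ * ((i:ℝ)+1)^(-p))^2 :=
              pow_le_pow_left₀ (hapos i).le (hab i).2 2
        _ = c₂^2 * ((i:ℝ)+1) ^ ((-p)*2) := by rw [mul_pow, sq_rpow (-p) (hxpos i).le]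
      have hq2 : qFun j α (σ (i+1) * a (i+1)^2) ^ 2 ≤
          ((c₁^3) ^ (-(1+τ')) * ((i:ℝ)+1) ^ (((-1 - 2*ε) + (-p)*2) * (-(1+τ')))) *
            ((j:ℝ)/α) ^ (1-τ') :=
        hq.trans (mul_le_mul_of_nonneg_right hl3 (Real.rpow_nonneg hJ.le _))
      calc σ (i+1) ^ (t+2) * a (i+1)^2 * qFun j α (σ (i+1) * a (i+1)^2) ^ 2
          ≤ (c₂ ^ (t+2) * ((i:ℝ)+1) ^ ((-1 - 2*ε) * (t+2))) *
              (c₂^2 * ((i:ℝ)+1) ^ ((-p)*2)) *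
              (((c₁^3) ^ (-(1+τ')) * ((i:ℝ)+1) ^ (((-1 - 2*ε) + (-p)*2) * (-(1+τ')))) *
                ((j:ℝ)/α) ^ (1-τ')) := by
            refine mul_le_mul (mul_le_mul hσt2 ha2 (sq_nonneg _) ?_) hq2 (sq_nonneg _) ?_
            · exact mul_nonneg (Real.rpow_nonneg hc₂.le _) (Real.rpow_nonneg (hxpos i).le _)
            · exact mul_nonneg (mul_nonneg (Real.rpow_nonneg hc₂.le _)
                (Real.rpow_nonneg (hxpos i).le _))
                (mul_nonneg (sq_nonneg _) (Real.rpow_nonneg (hxpos i).le _))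
      _ = (Kv * ((j:ℝ)/α)^(1-τ')) *
            (((i:ℝ)+1) ^ ((-1 - 2*ε)*(t+2)) * ((i:ℝ)+1) ^ ((-p)*2) *
              ((i:ℝ)+1) ^ (((-1 - 2*ε) + (-p)*2) * (-(1+τ')))) := by
          rw [hKvdef]; ring
      _ = (Kv * ((j:ℝ)/α)^(1-τ')) *
            ((i:ℝ)+1) ^ ((-1 - 2*ε)*(t+2) + (-p)*2 + ((-1 - 2*ε) + (-p)*2)*(-(1+τ'))) := by
          rw [← Real.rpow_add (hxpos i), ← Real.rpow_add (hxpos i)]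
    have hunn : ∀ i : ℕ, 0 ≤ σ (i+1) ^ (t+2) * a (i+1)^2 *
        qFun j α (σ (i+1) * a (i+1)^2) ^ 2 := fun i =>
      mul_nonneg (mul_nonneg (Real.rpow_nonneg (hσpos i).le _) (sq_nonneg _)) (sq_nonneg _)
    have hgj : Summable (fun i : ℕ => (Kv * ((j:ℝ)/α)^(1-τ')) *
        ((i:ℝ)+1) ^ ((-1 - 2*ε)*(t+2) + (-p)*2 + ((-1 - 2*ε) + (-p)*2)*(-(1+τ')))) :=
      hSEs.mul_left _
    have hus : Summable (fun i : ℕ =>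
        σ (i+1) ^ (t+2) * a (i+1)^2 * qFun j α (σ (i+1) * a (i+1)^2) ^ 2) :=
      Summable.of_nonneg_of_le hunn claimV hgj
    calc (∑' i : ℕ, σ (i+1) ^ (t+2) * a (i+1)^2 * qFun j α (σ (i+1) * a (i+1)^2) ^ 2)
        ≤ ∑' i : ℕ, (Kv * ((j:ℝ)/α)^(1-τ')) *
            ((i:ℝ)+1) ^ ((-1 - 2*ε)*(t+2) + (-p)*2 + ((-1 - 2*ε) + (-p)*2)*(-(1+τ'))) :=
          Summable.tsum_le_tsum claimV hus hgj
    _ = (Kv * ((j:ℝ)/α)^(1-τ')) * SE := by rw [tsum_mul_left, hSEdef]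
    _ ≤ (Kv * ((n:ℝ)/α)^(1-τ')) * SE := by
        refine mul_le_mul_of_nonneg_right (mul_le_mul_of_nonneg_left ?_ hKv.le) hSE
        refine Real.rpow_le_rpow hJ.le ?_ (by linarith)
        have : (j:ℝ) ≤ (n:ℝ) := by exact_mod_cast hj.2
        gcongr
  have hsumV := Finset.sum_le_card_nsmul (Finset.Icc 1 n) _ _ hinner
  rw [Nat.card_Icc, Nat.add_sub_cancel, nsmul_eq_mul] at hsumV
  have hVle : Vterm σ a t γ α n ≤ CV * ((γ^2/α) * ((n:ℝ)/α)^(-τv)) := by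
    have h1 : Vterm σ a t γ α n ≤ (γ^2/(n:ℝ)^2) *
        ((n:ℝ) * ((Kv * ((n:ℝ)/α)^(1-τ')) * SE)) := by
      unfold Vterm
      exact mul_le_mul_of_nonneg_left hsumV (by positivity)
    have hn0 : (n:ℝ) ≠ 0 := hn'.ne'
    have hα0 : α ≠ 0 := hα.ne'
    have hid : (γ^2/(n:ℝ)^2) * ((n:ℝ) * ((Kv * ((n:ℝ)/α)^(1-τ')) * SE)) =
        (γ^2/α) * ((Kv * SE) * ((n:ℝ)/α)^(-τ')) := by
      have hsplit : ((n:ℝ)/α)^(1-τ') = ((n:ℝ)/α) * ((n:ℝ)/α)^(-τ') := by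
        rw [show (1-τ' : ℝ) = 1 + (-τ') by ring, Real.rpow_add hN, Real.rpow_one]
      rw [hsplit]
      field_simp
    have hfin : ((n:ℝ)/α) ^ (-τ') ≤ max 1 α * ((n:ℝ)/α)^(-τv) := by
      rcases le_or_gt 1 ((n:ℝ)/α) with h | h
      · calc ((n:ℝ)/α)^(-τ') ≤ ((n:ℝ)/α)^(-τv) :=
              Real.rpow_le_rpow_of_exponent_le h (by linarith)
        _ = 1 * ((n:ℝ)/α)^(-τv) := (one_mul _).symm
        _ ≤ max 1 α * ((n:ℝ)/α)^(-τv) :=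
              mul_le_mul_of_nonneg_right (le_max_left _ _) (Real.rpow_nonneg hN.le _)
      · have hNτ : ((n:ℝ)/α)^(-τ') = ((n:ℝ)/α)^(τv-τ') * ((n:ℝ)/α)^(-τv) := by
          rw [← Real.rpow_add hN]; congr 1; ring
        have hb : ((n:ℝ)/α)^(τv-τ') ≤ α^(τ'-τv) := by
          rw [show τv - τ' = -(τ'-τv) by ring, Real.rpow_neg hN.le,
            ← Real.inv_rpow hN.le]
          refine Real.rpow_le_rpow (by positivity) ?_ (by linarith)
          rw [inv_div]
          calc α/(n:ℝ) ≤ α/1 := by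
                refine div_le_div_of_nonneg_left hα.le one_pos ?_
                exact_mod_cast hn
          _ = α := div_one α
        have hαb : α^(τ'-τv) ≤ max 1 α := by
          rcases le_total α 1 with hα1 | hα1
          · calc α^(τ'-τv) ≤ 1 := Real.rpow_le_one hα.le hα1 (by linarith)
            _ ≤ max 1 α := le_max_left _ _
          · calc α^(τ'-τv) ≤ α^(1:ℝ) :=
                  Real.rpow_le_rpow_of_exponent_le hα1 (by linarith)
            _ = α := Real.rpow_one α
            _ ≤ max 1 α := le_max_right _ _
        calc ((n:ℝ)/α)^(-τ') = ((n:ℝ)/α)^(τv-τ') * ((n:ℝ)/α)^(-τv) := hNτ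
        _ ≤ max 1 α * ((n:ℝ)/α)^(-τv) :=
            mul_le_mul_of_nonneg_right (hb.trans hαb) (Real.rpow_nonneg hN.le _)
    calc Vterm σ a t γ α n ≤ (γ^2/α) * ((Kv * SE) * ((n:ℝ)/α)^(-τ')) := h1.trans_eq hid
    _ ≤ (γ^2/α) * ((Kv * SE) * (max 1 α * ((n:ℝ)/α)^(-τv))) := by
        refine mul_le_mul_of_nonneg_left (mul_le_mul_of_nonneg_left hfin ?_) (by positivity)
        exact mul_nonneg hKv.le hSE
    _ = CV * ((γ^2/α) * ((n:ℝ)/α)^(-τv)) := by rw [hCVdef]; ring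
  -- ============ combine ============
  have hX : 0 ≤ ((n:ℝ)/α)^(-(2*τb)) := Real.rpow_nonneg hN.le _
  have hY : 0 ≤ (γ^2/α) * ((n:ℝ)/α)^(-τv) :=
    mul_nonneg (by positivity) (Real.rpow_nonneg hN.le _)
  set X := ((n:ℝ)/α)^(-(2*τb)) with hXdef
  set Y := (γ^2/α) * ((n:ℝ)/α)^(-τv) with hYdef
  have hring : (CB + CV + 1)*(X + Y) = CB*X + CV*Y + (CB*Y + CV*X + X + Y) := by ring
  have h1 : 0 ≤ CB*Y := mul_nonneg hCB hY
  have h2 : 0 ≤ CV*X := mul_nonneg hCV hX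
  linarith [hBle, hVle]
end
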